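/- Let λ ≠ μ, λ, μ > 0, ν ∈ (0,1], and set m₂(t) = (2λ/(λ-μ)) [E_{ν,1}(2(λ-μ)t^ν) - E_{ν,1}((λ-μ)t^ν)]. Then m₂ satisfies m₂(0) = 0 and its Laplace transform equals z ↦ 2λ z^{ν-1} / ((z^ν - (λ-μ))(z^ν - 2(λ-μ))) for z^ν > 2|λ-μ|. -/

import Mathlib

noncomputable def ML (a b x : ℝ) : ℝ := ∑' m : ℕ, x ^ m / Real.Gamma (a * m + b)

open MeasureTheory Real Set Filter Nat

/-- Summability of the Mittag-Leffler series. -/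
lemma ML_summable (ν x : ℝ) (hν0 : 0 < ν) :
    Summable (fun m : ℕ => x ^ m / Real.Gamma (ν * m + 1)) := by
  set R : ℝ := max 1 ((2 * |x| + 1) ^ (1 / ν)) with hRdef
  have hR1 : 1 ≤ R := le_max_left _ _
  have hR0 : 0 < R := lt_of_lt_of_le one_pos hR1
  have hbase : (0:ℝ) < 2 * |x| + 1 := by positivity
  have hRν : 2 * |x| + 1 ≤ R ^ ν := by
    have h1 : ((2 * |x| + 1) ^ (1 / ν)) ^ ν = 2 * |x| + 1 := by
      rw [← Real.rpow_mul hbase.le, one_div, inv_mul_cancel₀ hν0.ne', Real.rpow_one]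
    calc 2 * |x| + 1 = ((2 * |x| + 1) ^ (1 / ν)) ^ ν := h1.symm
      _ ≤ R ^ ν := Real.rpow_le_rpow (Real.rpow_nonneg hbase.le _) (le_max_right _ _) hν0.le
  -- eventually R ^ n ≤ n !
  have hev : ∀ᶠ n : ℕ in atTop, R ^ n ≤ (n ! : ℝ) := by
    have h := (FloorSemiring.tendsto_pow_div_factorial_atTop R).eventually_lt_const one_pos
    filter_upwards [h] with n hn
    have hfac : (0:ℝ) < (n ! : ℝ) := by positivity
    calc R ^ n = R ^ n / (n ! : ℝ) * (n ! : ℝ) := by field_simp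
      _ ≤ 1 * (n ! : ℝ) := by
          exact mul_le_mul_of_nonneg_right hn.le hfac.le
      _ = (n ! : ℝ) := one_mul _
  obtain ⟨N, hN⟩ := eventually_atTop.mp hev
  refine Summable.of_norm_bounded_eventually_nat (g := fun m => R * (1/2) ^ m)
    ((summable_geometric_of_lt_one (by norm_num) (by norm_num)).mul_left R) ?_
  have hM : ∀ᶠ m : ℕ in atTop, (N:ℝ) + 1 ≤ ν * m := by
    have : Tendsto (fun m : ℕ => ν * m) atTop atTop :=
      (tendsto_natCast_atTop_atTop).const_mul_atTop hν0
    exact this.eventually_ge_atTop _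
  filter_upwards [hM] with m hm
  set n : ℕ := ⌊ν * (m:ℝ)⌋₊ with hn
  have hνm0 : (0:ℝ) ≤ ν * m := by positivity
  have hn1 : N + 1 ≤ n := Nat.le_floor (by exact_mod_cast hm)
  have hnle : (n:ℝ) ≤ ν * m := Nat.floor_le hνm0
  have hΓpos : 0 < Real.Gamma (ν * m + 1) := Real.Gamma_pos_of_pos (by nlinarith)
  have hfact : ((n ! : ℕ) : ℝ) ≤ Real.Gamma (ν * m + 1) := by
    have h2 : Real.Gamma ((n:ℝ) + 1) = (n ! : ℝ) := Real.Gamma_nat_eq_factorial n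
    have hmem1 : ((n:ℝ) + 1) ∈ Ici (2:ℝ) := by
      have : (1:ℝ) ≤ (n:ℝ) := by exact_mod_cast Nat.one_le_iff_ne_zero.mpr (by omega)
      simp only [mem_Ici]; linarith
    have hmem2 : (ν * m + 1) ∈ Ici (2:ℝ) := by
      have : (1:ℝ) ≤ ν * m := by
        have : (1:ℝ) ≤ (N:ℝ) + 1 := le_add_of_nonneg_left (Nat.cast_nonneg N)
        linarith
      simp only [mem_Ici]; linarith
    have := Real.Gamma_strictMonoOn_Ici.monotoneOn hmem1 hmem2 (by linarith)
    linarith [h2 ▸ this]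
  have hRn : R ^ (ν * (m:ℝ) - 1) ≤ ((n !:ℕ) : ℝ) := by
    have h1 : R ^ (ν * (m:ℝ) - 1) ≤ R ^ ((n:ℝ)) := by
      apply Real.rpow_le_rpow_of_exponent_le hR1
      have := Nat.lt_floor_add_one (ν * (m:ℝ))
      linarith
    have h2 : R ^ ((n:ℝ)) = R ^ n := by rw [Real.rpow_natCast]
    have h3 : R ^ n ≤ ((n !:ℕ):ℝ) := hN n (by omega)
    linarith [h2 ▸ h1]
  have hlow : (2 * |x| + 1) ^ m / R ≤ Real.Gamma (ν * m + 1) := by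
    have h1 : (2 * |x| + 1) ^ m ≤ (R ^ ν) ^ m :=
      pow_le_pow_left₀ hbase.le hRν m
    have h2 : (R ^ ν) ^ m = R ^ (ν * (m:ℝ)) := by
      rw [← Real.rpow_natCast (R ^ ν) m, ← Real.rpow_mul hR0.le]
    have h3 : R ^ (ν * (m:ℝ) - 1) = R ^ (ν * (m:ℝ)) / R := by
      rw [Real.rpow_sub hR0, Real.rpow_one]
    have := hRn
    rw [h3] at this
    have h12 : (2 * |x| + 1) ^ m ≤ R ^ (ν * (m:ℝ)) := by rw [← h2]; exact h1
    have h4 : (2 * |x| + 1) ^ m / R ≤ R ^ (ν * (m:ℝ)) / R := by gcongr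
    linarith [hfact]
  have hlowpos : (0:ℝ) < (2 * |x| + 1) ^ m / R := by positivity
  have key : ‖x ^ m / Real.Gamma (ν * m + 1)‖ ≤ R * (1/2) ^ m := by
    rw [norm_div, Real.norm_eq_abs, Real.norm_eq_abs, abs_pow,
      abs_of_pos hΓpos]
    calc |x| ^ m / Real.Gamma (ν * m + 1)
        ≤ |x| ^ m / ((2 * |x| + 1) ^ m / R) :=
          div_le_div_of_nonneg_left (by positivity) hlowpos hlow
      _ = R * (|x| / (2 * |x| + 1)) ^ m := by
          rw [div_pow]; field_simp
      _ ≤ R * (1/2) ^ m := by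
          apply mul_le_mul_of_nonneg_left _ hR0.le
          apply pow_le_pow_left₀ (by positivity)
          rw [div_le_div_iff₀ (by positivity) (by norm_num)]
          linarith [abs_nonneg x]
  exact key

lemma exp_rpow_integrableOn {z s : ℝ} (hz : 0 < z) (hs : 0 ≤ s) :
    IntegrableOn (fun t : ℝ => Real.exp (-z * t) * t ^ s) (Ioi 0) := by
  have h := integrableOn_rpow_mul_exp_neg_mul_rpow (p := 1) (s := s) (b := z)
    (by linarith) one_pos hz
  simp_rw [Real.rpow_one] at h
  exact h.congr_fun (fun t _ => mul_comm _ _) measurableSet_Ioi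

lemma exp_rpow_integral {z s : ℝ} (hz : 0 < z) (hs : 0 ≤ s) :
    ∫ t in Ioi (0:ℝ), Real.exp (-z * t) * t ^ s
      = (1/z) ^ (s + 1) * Real.Gamma (s + 1) := by
  have h := Real.integral_rpow_mul_exp_neg_mul_Ioi (a := s + 1) (r := z)
    (by linarith) hz
  simp only [add_sub_cancel_right] at h
  rw [← h]
  refine setIntegral_congr_fun measurableSet_Ioi (fun t _ => ?_)
  rw [neg_mul, mul_comm]

lemma alg_final (L D w P : ℝ) (hD : D ≠ 0) (h1 : P - D ≠ 0) (h2 : P - 2*D ≠ 0) :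
    (2 * L / D) * (w / (P - 2*D) - w / (P - D)) = 2 * L * w / ((P - D) * (P - 2*D)) := by
  field_simp
  ring

/-- Value and summability of the geometric sum appearing after termwise integration. -/
lemma geom_aux {ν z a : ℝ} (hν0 : 0 < ν) (hz : 0 < z) (ha : |a| < z ^ ν) :
    Summable (fun m : ℕ => a ^ m * (1/z) ^ (ν * m + 1)) ∧
    ∑' m : ℕ, a ^ m * (1/z) ^ (ν * m + 1) = z ^ (ν - 1) / (z ^ ν - a) := by
  have hzν : (0:ℝ) < z ^ ν := Real.rpow_pos_of_pos hz _
  have hfun : (fun m : ℕ => a ^ m * (1/z) ^ (ν * m + 1))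
      = fun m : ℕ => (a / z ^ ν) ^ m * (1/z) := by
    funext m
    have h1 : (1/z) ^ (ν * (m:ℝ) + 1) = ((1/z) ^ ν) ^ m * (1/z) := by
      rw [Real.rpow_add (by positivity), Real.rpow_one, Real.rpow_mul (by positivity),
        Real.rpow_natCast]
    rw [h1, one_div, Real.inv_rpow hz.le]
    ring
  have hr : ‖a / z ^ ν‖ < 1 := by
    rw [Real.norm_eq_abs, abs_div, abs_of_pos hzν, div_lt_one hzν]
    exact ha
  constructor
  · rw [hfun]
    exact (summable_geometric_of_norm_lt_one hr).mul_right _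
  · rw [hfun, tsum_mul_right, tsum_geometric_of_norm_lt_one hr]
    have hne : z ^ ν - a ≠ 0 := by
      have : a < z ^ ν := lt_of_le_of_lt (le_abs_self a) ha
      linarith
    have h2 : z ^ (ν - 1) = z ^ ν / z := by
      rw [Real.rpow_sub hz, Real.rpow_one]
    have h3 : (1 - a / z ^ ν) = (z ^ ν - a) / z ^ ν := by field_simp
    rw [h2, h3, inv_div, _root_.div_mul_div_comm, mul_one, div_div, mul_comm (z ^ ν - a) z]

theorem stmt14 (lam mu ν : ℝ) (hlam : 0 < lam) (hmu : 0 < mu) (hne : lam ≠ mu)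
    (hν0 : 0 < ν) (hν1 : ν ≤ 1) :
    (fun t : ℝ => (2 * lam / (lam - mu)) *
        (ML ν 1 (2 * (lam - mu) * t ^ ν) - ML ν 1 ((lam - mu) * t ^ ν))) 0 = 0 ∧
    ∀ z : ℝ, 0 < z → 2 * |lam - mu| < z ^ ν →
      ∫ t in Set.Ioi (0:ℝ), Real.exp (-z * t) *
          ((2 * lam / (lam - mu)) *
            (ML ν 1 (2 * (lam - mu) * t ^ ν) - ML ν 1 ((lam - mu) * t ^ ν)))
        = 2 * lam * z ^ (ν - 1) / ((z ^ ν - (lam - mu)) * (z ^ ν - 2 * (lam - mu))) := by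
  constructor
  · simp [Real.zero_rpow hν0.ne']
  intro z hz h2
  set d : ℝ := lam - mu with hd
  have hdne : d ≠ 0 := sub_ne_zero.mpr hne
  set c : ℝ := 2 * lam / d with hc
  have hzν : (0:ℝ) < z ^ ν := Real.rpow_pos_of_pos hz _
  have habs2 : |2 * d| < z ^ ν := by
    rw [abs_mul, abs_two]; exact h2
  have habs1 : |d| < z ^ ν := by
    have : |d| ≤ 2 * |d| := by nlinarith [abs_nonneg d]
    linarith
  -- per-term quantities
  set K : ℕ → ℝ := fun m => c * ((2*d) ^ m - d ^ m) / Real.Gamma (ν * m + 1) with hK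
  set G : ℕ → ℝ → ℝ := fun m t => Real.exp (-z * t) * (K m * t ^ (ν * (m:ℝ))) with hG
  have hΓpos : ∀ m : ℕ, 0 < Real.Gamma (ν * m + 1) :=
    fun m => Real.Gamma_pos_of_pos (by positivity)
  -- pointwise series representation of ML on Ioi 0
  have hMLpt : ∀ a : ℝ, ∀ t ∈ Ioi (0:ℝ),
      (fun m : ℕ => (a * t ^ ν) ^ m / Real.Gamma (ν * m + 1))
        = fun m : ℕ => a ^ m * t ^ (ν * (m:ℝ)) / Real.Gamma (ν * m + 1) := by
    intro a t ht
    funext m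
    rw [mul_pow, ← Real.rpow_natCast (t ^ ν) m, ← Real.rpow_mul (le_of_lt ht)]
  have hMLsum : ∀ a : ℝ, ∀ t ∈ Ioi (0:ℝ),
      Summable (fun m : ℕ => a ^ m * t ^ (ν * (m:ℝ)) / Real.Gamma (ν * m + 1)) := by
    intro a t ht
    have := ML_summable ν (a * t ^ ν) hν0
    rwa [hMLpt a t ht] at this
  have hMLval : ∀ a : ℝ, ∀ t ∈ Ioi (0:ℝ),
      ML ν 1 (a * t ^ ν) = ∑' m : ℕ, a ^ m * t ^ (ν * (m:ℝ)) / Real.Gamma (ν * m + 1) := by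
    intro a t ht
    rw [ML, hMLpt a t ht]
  -- the integrand equals the tsum of G pointwise on Ioi 0
  have hpt : ∀ t ∈ Ioi (0:ℝ),
      Real.exp (-z * t) * (c * (ML ν 1 (2 * d * t ^ ν) - ML ν 1 (d * t ^ ν)))
        = ∑' m : ℕ, G m t := by
    intro t ht
    rw [hMLval (2*d) t ht, hMLval d t ht,
      ← Summable.tsum_sub (hMLsum (2*d) t ht) (hMLsum d t ht), ← tsum_mul_left, ← tsum_mul_left]
    refine tsum_congr fun m => ?_
    simp only [hG, hK]
    field_simp
  -- integrability of each G m
  have hGint : ∀ m : ℕ, IntegrableOn (G m) (Ioi 0) := by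
    intro m
    have h : IntegrableOn (fun t : ℝ => K m * (Real.exp (-z * t) * t ^ (ν * (m:ℝ)))) (Ioi 0) :=
      (exp_rpow_integrableOn hz (s := ν * (m:ℝ)) (by positivity)).const_mul (K m)
    exact h.congr_fun (fun t _ => by simp only [hG]; ring) measurableSet_Ioi
  -- the norm integrals
  have hGnorm : ∀ m : ℕ, ∫ t in Ioi (0:ℝ), ‖G m t‖
      = |K m| * ((1/z) ^ (ν * (m:ℝ) + 1) * Real.Gamma (ν * (m:ℝ) + 1)) := by
    intro m
    have h1 : ∀ t ∈ Ioi (0:ℝ), ‖G m t‖ = |K m| * (Real.exp (-z * t) * t ^ (ν * (m:ℝ))) := by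
      intro t ht
      simp only [hG, Real.norm_eq_abs, abs_mul, abs_of_pos (Real.exp_pos _),
        abs_of_nonneg (Real.rpow_nonneg (le_of_lt ht) _)]
      ring
    rw [setIntegral_congr_fun measurableSet_Ioi h1, integral_const_mul,
      exp_rpow_integral hz (by positivity)]
  -- the integrals
  have hGval : ∀ m : ℕ, ∫ t in Ioi (0:ℝ), G m t
      = c * ((2*d) ^ m * (1/z) ^ (ν * (m:ℝ) + 1) - d ^ m * (1/z) ^ (ν * (m:ℝ) + 1)) := by
    intro m
    have h1 : ∀ t ∈ Ioi (0:ℝ), G m t = K m * (Real.exp (-z * t) * t ^ (ν * (m:ℝ))) := by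
      intro t ht; simp only [hG]; ring
    rw [setIntegral_congr_fun measurableSet_Ioi h1, integral_const_mul,
      exp_rpow_integral hz (by positivity), hK]
    field_simp
  have hsum2 := geom_aux hν0 hz habs2
  have hsum1 := geom_aux hν0 hz habs1
  -- summability of the norm integrals
  have hnormsum : Summable fun m : ℕ => ∫ t in Ioi (0:ℝ), ‖G m t‖ := by
    have hgeom : Summable (fun m : ℕ => |c| * (|2*d| ^ m * (1/z) ^ (ν * (m:ℝ) + 1))
          + |c| * (|d| ^ m * (1/z) ^ (ν * (m:ℝ) + 1))) :=
      (((geom_aux hν0 hz (by rwa [abs_abs] : |(|2*d|)| < z ^ ν)).1.mul_left |c|)).add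
        (((geom_aux hν0 hz (by rwa [abs_abs] : |(|d|)| < z ^ ν)).1.mul_left |c|))
    refine Summable.of_nonneg_of_le (fun m => integral_nonneg fun t => norm_nonneg _)
      (fun m => ?_) hgeom
    · rw [hGnorm m]
      have hpow : (0:ℝ) ≤ (1/z) ^ (ν * (m:ℝ) + 1) := Real.rpow_nonneg (by positivity) _
      have h1 : |K m| * Real.Gamma (ν * (m:ℝ) + 1) ≤ |c| * (|2*d| ^ m + |d| ^ m) := by
        rw [hK, abs_div, abs_of_pos (hΓpos m), div_mul_cancel₀ _ (hΓpos m).ne']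
        rw [abs_mul]
        apply mul_le_mul_of_nonneg_left _ (abs_nonneg c)
        calc |(2*d) ^ m - d ^ m| ≤ |(2*d) ^ m| + |d ^ m| := abs_sub _ _
          _ = |2*d| ^ m + |d| ^ m := by rw [abs_pow, abs_pow]
      calc |K m| * ((1/z) ^ (ν * (m:ℝ) + 1) * Real.Gamma (ν * (m:ℝ) + 1))
          = (|K m| * Real.Gamma (ν * (m:ℝ) + 1)) * (1/z) ^ (ν * (m:ℝ) + 1) := by ring
        _ ≤ (|c| * (|2*d| ^ m + |d| ^ m)) * (1/z) ^ (ν * (m:ℝ) + 1) :=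
            mul_le_mul_of_nonneg_right h1 hpow
        _ = |c| * (|2*d| ^ m * (1/z) ^ (ν * (m:ℝ) + 1))
            + |c| * (|d| ^ m * (1/z) ^ (ν * (m:ℝ) + 1)) := by ring
  -- swap integral and sum
  have hswap : ∑' m : ℕ, ∫ t in Ioi (0:ℝ), G m t
      = ∫ t in Ioi (0:ℝ), ∑' m : ℕ, G m t :=
    integral_tsum_of_summable_integral_norm hGint hnormsum
  have hintcongr : ∫ t in Ioi (0:ℝ), Real.exp (-z * t) *
        (c * (ML ν 1 (2 * d * t ^ ν) - ML ν 1 (d * t ^ ν)))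
      = ∫ t in Ioi (0:ℝ), ∑' m : ℕ, G m t :=
    setIntegral_congr_fun measurableSet_Ioi hpt
  rw [show (2 : ℝ) * lam / (lam - mu) = c from rfl] at *
  calc ∫ t in Ioi (0:ℝ), Real.exp (-z * t) *
        (c * (ML ν 1 (2 * (lam - mu) * t ^ ν) - ML ν 1 ((lam - mu) * t ^ ν)))
      = ∑' m : ℕ, ∫ t in Ioi (0:ℝ), G m t := by rw [← hswap] at hintcongr; exact hintcongr
    _ = c * ((∑' m : ℕ, (2*d) ^ m * (1/z) ^ (ν * (m:ℝ) + 1))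
          - ∑' m : ℕ, d ^ m * (1/z) ^ (ν * (m:ℝ) + 1)) := by
        rw [← Summable.tsum_sub hsum2.1 hsum1.1, ← tsum_mul_left]
        exact tsum_congr fun m => by rw [hGval m]
    _ = c * (z ^ (ν - 1) / (z ^ ν - 2*d) - z ^ (ν - 1) / (z ^ ν - d)) := by
        rw [hsum2.2, hsum1.2]
    _ = 2 * lam * z ^ (ν - 1) / ((z ^ ν - (lam - mu)) * (z ^ ν - 2 * (lam - mu))) := by
        have hne1 : z ^ ν - d ≠ 0 := by
          have : d ≤ |d| := le_abs_self d
          have : d < z ^ ν := by linarith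
          linarith
        have hne2 : z ^ ν - 2*d ≠ 0 := by
          have : 2*d ≤ |2*d| := le_abs_self _
          have : 2*d < z ^ ν := by linarith
          linarith
        exact alg_final lam (lam - mu) (z ^ (ν - 1)) (z ^ ν) hdne hne1 hne2
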